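/- Let r : {0,…,n−1} → [0,∞). Suppose (α,β) and (α',β') are two pairs of vectors in [0,1]^n × [0,1]^n such that ∑_j α(j) ≤ 1, ∑_j β(j) ≤ 1, ∑_j α'(j) ≤ 1, ∑_j β'(j) ≤ 1, and α(j) + β(j) = r(j) = α'(j) + β'(j) for all j. Then Φ(α,β) − Φ(α',β') ≤ 2, where Φ(α,β) = −∑_j α(j)·log₂ α(j) − ∑_j β(j)·log₂ β(j). -/

import Mathlib

/-- The pair entropy Φ(α,β) = −∑ α(j)·log₂ α(j) − ∑ β(j)·log₂ β(j). -/
noncomputable def pairEntropy {n : ℕ} (α β : Fin n → ℝ) : ℝ :=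
  (-∑ j, α j * Real.logb 2 (α j)) - ∑ j, β j * Real.logb 2 (β j)

private lemma aux_lb (a b : ℝ) (ha : 0 ≤ a) (hb : 0 ≤ b) :
    a * Real.logb 2 a + b * Real.logb 2 b ≤ (a + b) * Real.logb 2 (a + b) := by
  have h1 : a * Real.logb 2 a ≤ a * Real.logb 2 (a + b) := by
    rcases ha.eq_or_lt with rfl | ha'
    · simp
    · exact mul_le_mul_of_nonneg_left
        (Real.logb_le_logb_of_le one_lt_two ha' (by linarith)) ha
  have h2 : b * Real.logb 2 b ≤ b * Real.logb 2 (a + b) := by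
    rcases hb.eq_or_lt with rfl | hb'
    · simp
    · exact mul_le_mul_of_nonneg_left
        (Real.logb_le_logb_of_le one_lt_two hb' (by linarith)) hb
  nlinarith [h1, h2]

private lemma aux_ub (a b : ℝ) (ha : 0 ≤ a) (hb : 0 ≤ b) :
    (a + b) * Real.logb 2 (a + b) - a * Real.logb 2 a - b * Real.logb 2 b ≤ a + b := by
  have h2 : (0:ℝ) < Real.log 2 := Real.log_pos one_lt_two
  have hlogb : ∀ x : ℝ, Real.logb 2 x = Real.log x / Real.log 2 := fun x => rfl
  rcases ha.eq_or_lt with rfl | ha'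
  · simp; exact hb
  rcases hb.eq_or_lt with rfl | hb'
  · simp [h2.le]; exact ha'.le
  -- both positive
  have key : ∀ x y : ℝ, 0 < x → 0 < y →
      x * (Real.log (x + y) - Real.log 2 - Real.log x) ≤ (x + y) / 2 - x := by
    intro x y hx hy
    have hpos : 0 < (x + y) / (2 * x) := by positivity
    have hlog := Real.log_le_sub_one_of_pos hpos
    have heq : Real.log ((x + y) / (2 * x)) =
        Real.log (x + y) - Real.log 2 - Real.log x := by
      rw [Real.log_div (by linarith) (by positivity), Real.log_mul (by norm_num) hx.ne']
      ring
    rw [heq] at hlog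
    have := mul_le_mul_of_nonneg_left hlog hx.le
    have hx' : x ≠ 0 := hx.ne'
    calc x * (Real.log (x + y) - Real.log 2 - Real.log x)
        ≤ x * ((x + y) / (2 * x) - 1) := this
      _ = (x + y) / 2 - x := by field_simp
  have k1 := key a b ha' hb'
  have k2 := key b a hb' ha'
  rw [add_comm b a] at k2
  have hsum : (a + b) * Real.log (a + b) - a * Real.log a - b * Real.log b
      ≤ (a + b) * Real.log 2 := by nlinarith [k1, k2]
  rw [hlogb, hlogb, hlogb]
  have hgoal : ((a + b) * Real.log (a + b) - a * Real.log a - b * Real.log b) / Real.log 2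
      ≤ a + b := by
    rw [div_le_iff₀ h2]; linarith
  calc (a + b) * (Real.log (a + b) / Real.log 2) - a * (Real.log a / Real.log 2)
        - b * (Real.log b / Real.log 2)
      = ((a + b) * Real.log (a + b) - a * Real.log a - b * Real.log b) / Real.log 2 := by ring
    _ ≤ a + b := hgoal

theorem pairEntropy_diff_le_two {n : ℕ} (r α β α' β' : Fin n → ℝ)
    (hr : ∀ j, 0 ≤ r j)
    (hα0 : ∀ j, 0 ≤ α j) (hα1 : ∀ j, α j ≤ 1)
    (hβ0 : ∀ j, 0 ≤ β j) (hβ1 : ∀ j, β j ≤ 1)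
    (hα'0 : ∀ j, 0 ≤ α' j) (hα'1 : ∀ j, α' j ≤ 1)
    (hβ'0 : ∀ j, 0 ≤ β' j) (hβ'1 : ∀ j, β' j ≤ 1)
    (hαsum : ∑ j, α j ≤ 1) (hβsum : ∑ j, β j ≤ 1)
    (hα'sum : ∑ j, α' j ≤ 1) (hβ'sum : ∑ j, β' j ≤ 1)
    (hr1 : ∀ j, α j + β j = r j) (hr2 : ∀ j, α' j + β' j = r j) :
    pairEntropy α β - pairEntropy α' β' ≤ 2 := by
  have hdiff : pairEntropy α β - pairEntropy α' β' =
      ∑ j, ((-(α j * Real.logb 2 (α j)) - β j * Real.logb 2 (β j)) -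
        (-(α' j * Real.logb 2 (α' j)) - β' j * Real.logb 2 (β' j))) := by
    unfold pairEntropy
    rw [Finset.sum_sub_distrib, Finset.sum_sub_distrib, Finset.sum_sub_distrib,
      Finset.sum_neg_distrib, Finset.sum_neg_distrib]
  rw [hdiff]
  have hle : ∀ j, ((-(α j * Real.logb 2 (α j)) - β j * Real.logb 2 (β j)) -
      (-(α' j * Real.logb 2 (α' j)) - β' j * Real.logb 2 (β' j))) ≤ r j := by
    intro j
    have hub := aux_ub (α j) (β j) (hα0 j) (hβ0 j)
    have hlb := aux_lb (α' j) (β' j) (hα'0 j) (hβ'0 j)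
    rw [hr1 j] at hub
    rw [hr2 j] at hlb
    linarith
  calc ∑ j, ((-(α j * Real.logb 2 (α j)) - β j * Real.logb 2 (β j)) -
        (-(α' j * Real.logb 2 (α' j)) - β' j * Real.logb 2 (β' j)))
      ≤ ∑ j, r j := Finset.sum_le_sum fun j _ => hle j
    _ = ∑ j, α j + ∑ j, β j := by
        rw [← Finset.sum_add_distrib]; exact Finset.sum_congr rfl fun j _ => (hr1 j).symm
    _ ≤ 2 := by linarith
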